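/- Let P be a register protocol with initial value d0 and target qf, and suppose Post*(↑{⟨q0, d0⟩}) = ↑{θ_1, …, θ_n} and Pre*([qf]) = ↑{η_1, …, η_m}. For i ∈ [1; n] and q in the support of θ_i, let d_{i,q} = max{ |st(η_j)(q) − st(θ_i)(q)| : 1 ≤ j ≤ m and supp(st(θ_i)) = supp(st(η_j)) } (with max ∅ = 0). If Post*(↑{⟨q0, d0⟩}) is included in Pre*([qf]) modulo single-state incrementation, then k0 = max_{1 ≤ i ≤ n} ( |st(θ_i)| + Σ_{q ∈ supp(θ_i)} d_{i,q} ) is a positive cut-off: for every h ≥ k0, Post*({⟨q0^h, d0⟩}) ⊆ Pre*([qf]) (equivalently, qf is reached almost surely in the system of h processes). -/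

import Mathlib

/-- Operation type of a register protocol: read or write. -/
inductive Op : Type
  | R : Op
  | W : Op
deriving DecidableEq

instance instFintypeOp : Fintype Op :=
  ⟨{Op.R, Op.W}, fun x => by cases x <;> simp⟩

/-- A location has at least one outgoing transition. -/
def Nonblock {Q D : Type*} (T : Set (Q × Op × D × Q)) : Prop :=
  ∀ q : Q, ∃ op d q', (q, op, d, q') ∈ T

/-- Whenever a read transition exists from `q`, reads of every datum are enabled in `q`. -/
def ReadTotal {Q D : Type*} (T : Set (Q × Op × D × Q)) : Prop :=
  ∀ q d' q', (q, Op.R, d', q') ∈ T → ∀ d : D, ∃ qd, (q, Op.R, d, qd) ∈ T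

/-- One step of the distributed system associated with transition set `T`:
a configuration is a pair of a finite multiset of locations and a register datum. -/
def IsStep {Q D : Type*} [DecidableEq Q] (T : Set (Q × Op × D × Q)) :
    Multiset Q × D → Multiset Q × D → Prop := fun γ γ' =>
  ∃ q op d'' q', (q, op, d'', q') ∈ T ∧ q ∈ γ.1 ∧
    γ'.1 = γ.1 - {q} + {q'} ∧
    ((op = Op.R ∧ γ.2 = d'' ∧ γ'.2 = d'') ∨ (op = Op.W ∧ γ'.2 = d''))

/-- Reachability: reflexive-transitive closure of the step relation. -/
def Reach {Q D : Type*} [DecidableEq Q] (T : Set (Q × Op × D × Q)) :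
    Multiset Q × D → Multiset Q × D → Prop :=
  Relation.ReflTransGen (IsStep T)

/-- `PostStar T S` is the set of configurations reachable from some configuration of `S`. -/
def PostStar {Q D : Type*} [DecidableEq Q] (T : Set (Q × Op × D × Q))
    (S : Set (Multiset Q × D)) : Set (Multiset Q × D) :=
  {γ' | ∃ γ ∈ S, Reach T γ γ'}

/-- `PreStar T S` is the set of configurations from which some configuration of `S`
is reachable. -/
def PreStar {Q D : Type*} [DecidableEq Q] (T : Set (Q × Op × D × Q))
    (S : Set (Multiset Q × D)) : Set (Multiset Q × D) :=
  {γ | ∃ γ' ∈ S, Reach T γ γ'}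

/-- `[qf]`: configurations containing at least one process in location `qf`. -/
def TargetSet {Q D : Type*} [DecidableEq Q] (qf : Q) : Set (Multiset Q × D) :=
  {γ | 0 < γ.1.count qf}

/-- The order `⪯` on configurations: same register content, same support,
and componentwise smaller multiset. -/
def ConfLE {Q D : Type*} [DecidableEq Q] (γ γ' : Multiset Q × D) : Prop :=
  γ.2 = γ'.2 ∧ γ.1.toFinset = γ'.1.toFinset ∧ γ.1 ≤ γ'.1

/-- Upward closure of a set of configurations with respect to `⪯`. -/
def UpSet {Q D : Type*} [DecidableEq Q] (B : Set (Multiset Q × D)) :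
    Set (Multiset Q × D) :=
  {γ' | ∃ γ ∈ B, ConfLE γ γ'}

/-- `Δ` is included in `Δ'` modulo single-state incrementation. -/
def IncModSSI {Q D : Type*} [DecidableEq Q] (Δ Δ' : Set (Multiset Q × D)) : Prop :=
  ∀ γ ∈ Δ, ∀ q ∈ γ.1.toFinset, ∃ k : ℕ, (γ.1 + Multiset.replicate k q, γ.2) ∈ Δ'


private lemma step_card {Q D : Type*} [DecidableEq Q] {T : Set (Q × Op × D × Q)}
    {γ γ' : Multiset Q × D} (h : IsStep T γ γ') :
    Multiset.card γ'.1 = Multiset.card γ.1 := by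
  obtain ⟨q, op, d'', q', _, hq, hc, _⟩ := h
  rw [hc]
  rw [Multiset.card_add, Multiset.card_sub (by simpa using hq)]
  have : 1 ≤ Multiset.card γ.1 := by
    rw [Nat.one_le_iff_ne_zero]
    intro h0
    rw [Multiset.card_eq_zero] at h0
    simp [h0] at hq
  simp
  omega

private lemma reach_card {Q D : Type*} [DecidableEq Q] {T : Set (Q × Op × D × Q)}
    {γ γ' : Multiset Q × D} (h : Reach T γ γ') :
    Multiset.card γ'.1 = Multiset.card γ.1 := by
  induction h with
  | refl => rfl
  | tail _ hs ih => rw [step_card hs, ih]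

/-- if `Post*(↑{⟨q0,d0⟩}) = ↑{θ_1,…,θ_n}` is included in
`Pre*([qf]) = ↑{η_1,…,η_m}` modulo single-state incrementation, then
`k0 = max_i (|st(θ_i)| + Σ_{q ∈ supp(θ_i)} d_{i,q})` is a positive cut-off,
where `d_{i,q} = max{ |st(η_j)(q) − st(θ_i)(q)| : supp(st(θ_i)) = supp(st(η_j)) }`
(with `max ∅ = 0`). -/
theorem stmt_8 {Q D : Type*} [DecidableEq Q]
    (T : Set (Q × Op × D × Q)) (hnb : Nonblock T) (hrt : ReadTotal T)
    (q0 qf : Q) (d0 : D) (n m : ℕ)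
    (θ : Fin n → Multiset Q × D) (η : Fin m → Multiset Q × D)
    (hpost : PostStar T (UpSet {(({q0} : Multiset Q), d0)}) = UpSet (Set.range θ))
    (hpre : PreStar T (TargetSet qf) = UpSet (Set.range η))
    (hinc : IncModSSI (PostStar T (UpSet {(({q0} : Multiset Q), d0)}))
        (PreStar T (TargetSet qf))) :
    ∀ h : ℕ,
      (Finset.univ.sup fun i : Fin n =>
        Multiset.card (θ i).1 + ∑ q ∈ (θ i).1.toFinset,
          (Finset.univ.filter
              (fun j : Fin m => (θ i).1.toFinset = (η j).1.toFinset)).sup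
            (fun j : Fin m => Nat.dist ((η j).1.count q) ((θ i).1.count q))) ≤ h →
      PostStar T {(Multiset.replicate h q0, d0)} ⊆ PreStar T (TargetSet qf) := by
  intro h hk γ hγ
  -- abbreviations
  set k0 := (Finset.univ.sup fun i : Fin n =>
        Multiset.card (θ i).1 + ∑ q ∈ (θ i).1.toFinset,
          (Finset.univ.filter
              (fun j : Fin m => (θ i).1.toFinset = (η j).1.toFinset)).sup
            (fun j : Fin m => Nat.dist ((η j).1.count q) ((θ i).1.count q))) with hk0
  -- h ≥ 1
  have hself : (({q0} : Multiset Q), d0) ∈ PostStar T (UpSet {(({q0} : Multiset Q), d0)}) :=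
    ⟨(({q0} : Multiset Q), d0), ⟨(({q0} : Multiset Q), d0), rfl, rfl, rfl, le_refl _⟩,
      Relation.ReflTransGen.refl⟩
  have h1 : 1 ≤ h := by
    rw [hpost] at hself
    obtain ⟨_, ⟨i0, rfl⟩, _, hfs, _⟩ := hself
    have hcard : 1 ≤ Multiset.card (θ i0).1 := by
      rw [Nat.one_le_iff_ne_zero, Ne, Multiset.card_eq_zero]
      intro h0
      rw [h0] at hfs
      simp at hfs
    have hsup := Finset.le_sup (f := fun i : Fin n =>
        Multiset.card (θ i).1 + ∑ q ∈ (θ i).1.toFinset,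
          (Finset.univ.filter
              (fun j : Fin m => (θ i).1.toFinset = (η j).1.toFinset)).sup
            (fun j : Fin m => Nat.dist ((η j).1.count q) ((θ i).1.count q)))
      (Finset.mem_univ i0)
    exact le_trans (le_trans hcard (Nat.le_add_right _ _)) (le_trans hsup hk)
  obtain ⟨γ0, hγ0, hr⟩ := hγ
  rw [Set.mem_singleton_iff] at hγ0
  subst hγ0
  -- γ is in Post* of the up-closed initial set
  have hγpost : γ ∈ PostStar T (UpSet {(({q0} : Multiset Q), d0)}) := by
    refine ⟨(Multiset.replicate h q0, d0), ⟨(({q0} : Multiset Q), d0), rfl, rfl, ?_, ?_⟩, hr⟩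
    · have hne : h ≠ 0 := Nat.one_le_iff_ne_zero.mp h1
      simp [Multiset.toFinset_replicate, hne]
    · have : ({q0} : Multiset Q) = Multiset.replicate 1 q0 := by simp
      rw [this]
      exact (Multiset.replicate_le_replicate q0).2 h1
  have hcardγ : Multiset.card γ.1 = h := by
    rw [reach_card hr]; simp
  rw [hpost] at hγpost
  obtain ⟨_, ⟨i, rfl⟩, hd, hfs, hle⟩ := hγpost
  -- d function
  set dd : Q → ℕ := fun q => (Finset.univ.filter
              (fun j : Fin m => (θ i).1.toFinset = (η j).1.toFinset)).sup
            (fun j : Fin m => Nat.dist ((η j).1.count q) ((θ i).1.count q)) with hdd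
  have hki : Multiset.card (θ i).1 + ∑ q ∈ (θ i).1.toFinset, dd q ≤ h := by
    have hsup := Finset.le_sup (f := fun i : Fin n =>
        Multiset.card (θ i).1 + ∑ q ∈ (θ i).1.toFinset,
          (Finset.univ.filter
              (fun j : Fin m => (θ i).1.toFinset = (η j).1.toFinset)).sup
            (fun j : Fin m => Nat.dist ((η j).1.count q) ((θ i).1.count q)))
      (Finset.mem_univ i)
    exact le_trans hsup hk
  -- pigeonhole: find q with count γ q ≥ count θ q + dd q
  have hSne : (θ i).1.toFinset.Nonempty := by
    rw [hfs, Multiset.toFinset_nonempty, ← Multiset.card_pos, hcardγ]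
    exact h1
  have hpig : ∃ q ∈ (θ i).1.toFinset, (θ i).1.count q + dd q ≤ γ.1.count q := by
    by_contra hc
    push_neg at hc
    have hsum : ∀ q ∈ (θ i).1.toFinset, γ.1.count q + 1 ≤ (θ i).1.count q + dd q :=
      fun q hq => hc q hq
    have := Finset.sum_le_sum hsum
    rw [Finset.sum_add_distrib, Finset.sum_add_distrib, Finset.sum_const, smul_eq_mul, mul_one,
      Multiset.toFinset_sum_count_eq] at this
    have hγsum : ∑ q ∈ (θ i).1.toFinset, γ.1.count q = h := by
      rw [hfs, Multiset.toFinset_sum_count_eq, hcardγ]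
    rw [hγsum] at this
    have hne : 1 ≤ (θ i).1.toFinset.card := Finset.card_pos.mpr hSne
    omega
  obtain ⟨q, hqS, hqcount⟩ := hpig
  -- apply IncModSSI to θ i at q
  have hθpost : θ i ∈ PostStar T (UpSet {(({q0} : Multiset Q), d0)}) := by
    rw [hpost]
    exact ⟨θ i, ⟨i, rfl⟩, rfl, rfl, le_refl _⟩
  obtain ⟨k, hkmem⟩ := hinc (θ i) hθpost q hqS
  rw [hpre] at hkmem
  obtain ⟨_, ⟨j, rfl⟩, hjd, hjfs, hjle⟩ := hkmem
  -- facts about η j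
  have hfsadd : ((θ i).1 + Multiset.replicate k q).toFinset = (θ i).1.toFinset := by
    rw [Multiset.toFinset_add, Multiset.toFinset_replicate]
    rcases Nat.eq_zero_or_pos k with rfl | hk0'
    · simp
    · rw [if_neg (Nat.pos_iff_ne_zero.mp hk0')]
      exact Finset.union_eq_left.mpr (Finset.singleton_subset_iff.mpr hqS)
  have hjfs' : (η j).1.toFinset = (θ i).1.toFinset := by rw [hjfs]; exact hfsadd
  have hjfilter : j ∈ Finset.univ.filter
      (fun j : Fin m => (θ i).1.toFinset = (η j).1.toFinset) := by
    rw [Finset.mem_filter]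
    exact ⟨Finset.mem_univ j, hjfs'.symm⟩
  have hdist0 := Finset.le_sup
    (f := fun j : Fin m => Nat.dist ((η j).1.count q) ((θ i).1.count q)) hjfilter
  have hdist : Nat.dist ((η j).1.count q) ((θ i).1.count q) ≤ dd q := hdist0
  have hcountq : (η j).1.count q ≤ (θ i).1.count q + dd q := by
    have : (η j).1.count q ≤ (θ i).1.count q + Nat.dist ((η j).1.count q) ((θ i).1.count q) := by
      unfold Nat.dist; omega
    omega
  -- η j ⪯ γ
  refine hpre ▸ (⟨η j, ⟨j, rfl⟩, ?_, ?_, ?_⟩ : γ ∈ UpSet (Set.range η))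
  · rw [hjd, ← hd]
  · rw [hjfs', hfs]
  · rw [Multiset.le_iff_count]
    intro a
    rcases eq_or_ne a q with rfl | hne
    · exact le_trans hcountq hqcount
    · have h1' : (η j).1.count a ≤ ((θ i).1 + Multiset.replicate k q).count a :=
        Multiset.count_le_of_le a hjle
      rw [Multiset.count_add, Multiset.count_replicate] at h1'
      have h0' : (if q = a then k else 0) = 0 := if_neg (fun hqa => hne hqa.symm)
      have h2' := Multiset.count_le_of_le a hle
      omega
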